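/- Let X be a continuum without cut-points and S_1 ⊆ … ⊆ S_k an increasing sequence of closed subsets of X with S_k ≠ ∅. Then every point (u,0) of J(X,S⃗) with u ∈ X − cl(D_X) (equivalently, u ∈ X − S_k) is a noncut-point of J(X,S⃗), i.e., J(X,S⃗) − {(u,0)} is connected. -/

import Mathlib

open Topology

/-- The set of isolated points of the subspace `S` (computed in the ambient space `W`). -/
def isoPts {W : Type*} [TopologicalSpace W] (S : Set W) : Set W :=
  {p | p ∈ S ∧ 𝓝[S \ {p}] p = ⊥}

/-- The canonical embedding of `X` into the ambient space `X × ℝ^ℕ`. -/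
def embW {X : Type*} (x : X) : X × (ℕ → ℝ) := (x, fun _ => 0)

/-- The canonical copy of `X` inside `X × ℝ^ℕ`. -/
def baseW (X : Type*) : Set (X × (ℕ → ℝ)) := {w | w.2 = fun _ => 0}

/-- Place the value `t` in coordinate `j`. -/
def addC {X : Type*} (j : ℕ) (t : ℝ) (w : X × (ℕ → ℝ)) : X × (ℕ → ℝ) :=
  (w.1, Function.update w.2 j t)

/-- `Z'` is a copy of `I(Z, B; D)` for some admissible `D`, realized using coordinate `j`:
`Z' = Z ∪ D` where `D` is a nonempty set of points `addC j t z` (`z ∈ Z`, `t ∈ (0,1]`),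
each of which is isolated in `Z'`, with `cl(D) − D = B`; by convention `D` is a single point
when `B = ∅`. -/
def IsIStep {X : Type*} [TopologicalSpace X] (j : ℕ)
    (Z B Z' : Set (X × (ℕ → ℝ))) : Prop :=
  ∃ D : Set (X × (ℕ → ℝ)),
    Z' = Z ∪ D ∧ D.Nonempty ∧
    (∀ p ∈ D, ∃ z ∈ Z, ∃ t ∈ Set.Ioc (0 : ℝ) 1, p = addC j t z) ∧
    (∀ p ∈ D, 𝓝[Z' \ {p}] p = ⊥) ∧
    closure D \ D = B ∧
    (B = ∅ → D.Subsingleton)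

/-- The iterated construction: `IsITowerFrom j Z As Z'` says that `Z'` is obtained from `Z`
by successively applying the `I(·, D_k ∪ A_{k+1})` construction along the list `As`,
where `D_k` is the current set of isolated points. -/
def IsITowerFrom {X : Type*} [TopologicalSpace X] :
    ℕ → Set (X × (ℕ → ℝ)) → List (Set X) → Set (X × (ℕ → ℝ)) → Prop
  | _, Z, [], Z' => Z' = Z
  | j, Z, A :: rest, Z' =>
      ∃ Zm, IsIStep j Z (isoPts Z ∪ (embW '' A)) Zm ∧ IsITowerFrom (j + 1) Zm rest Z'

/-- `Z` is a model of `I_n(X, A_1, …, A_n)` where `As = [A_1, …, A_n]`. -/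
def IsIModel {X : Type*} [TopologicalSpace X] (As : List (Set X))
    (Z : Set (X × (ℕ → ℝ))) : Prop :=
  IsITowerFrom 0 (baseW X) As Z


/-- The underlying set of `F(Z,B)`: the subspace `Z×{0} ∪ B×[0,1]` of `Z × [0,1]`. -/
abbrev FPts (Z : Type*) (B : Set Z) := {p : Z × unitInterval // p.2 = 0 ∨ p.1 ∈ B}

/-- The relation identifying all points of `B × {1}` to one point. -/
def FRel {Z : Type*} {B : Set Z} (p q : FPts Z B) : Prop :=
  p = q ∨ (p.val.2 = 1 ∧ q.val.2 = 1)

/-- The space `F(Z,B)`: the quotient of `Z×{0} ∪ B×[0,1]` collapsing `B × {1}` to a point. -/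
abbrev FSp (Z : Type*) [TopologicalSpace Z] (B : Set Z) := Quot (@FRel Z B)

/-- The closure of the set `D_X` of added points, viewed inside the subspace `Z`. -/
def JB {X : Type*} [TopologicalSpace X] (Z : Set (X × (ℕ → ℝ))) : Set ↥Z :=
  {z | (z : X × (ℕ → ℝ)) ∈ closure (Z \ baseW X)}

/-- The space `J(X, S⃗) = F(I(X,S⃗), cl(D_X))`, for `Z` a model of `I(X,S⃗)`. -/
abbrev JSp {X : Type*} [TopologicalSpace X] (Z : Set (X × (ℕ → ℝ))) :=
  FSp (↥Z) (JB Z)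

/-- The point of `J(X,S⃗)` determined by a representative. -/
def JPt {X : Type*} [TopologicalSpace X] (Z : Set (X × (ℕ → ℝ)))
    (p : FPts (↥Z) (JB Z)) : JSp Z := Quot.mk FRel p

lemma addC_not_base {X : Type*} (j : ℕ) {t : ℝ} (ht : t ≠ 0) (w : X × (ℕ → ℝ)) :
    addC j t w ∉ baseW X := by
  intro h
  have h2 : (addC j t w).2 j = 0 := congrFun h j
  rw [addC] at h2
  simp only [Function.update_self] at h2
  exact ht h2

lemma tower_mono {X : Type*} [TopologicalSpace X] (As : List (Set X)) :
    ∀ (j : ℕ) (Z Z' : Set (X × (ℕ → ℝ))), IsITowerFrom j Z As Z' → Z ⊆ Z' := by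
  induction As with
  | nil => intro j Z Z' h; rw [show Z' = Z from h]
  | cons A rest ih =>
    rintro j Z Z' ⟨Zm, ⟨D, hZm, -, -, -, -, -⟩, ht⟩
    subst hZm
    exact Set.subset_union_left.trans (ih (j+1) _ Z' ht)

lemma tower_closure {X : Type*} [TopologicalSpace X] (As : List (Set X)) :
    ∀ (j : ℕ) (Z Z' : Set (X × (ℕ → ℝ))) (A : Set X), IsITowerFrom j Z As Z' → A ∈ As →
      embW '' A ⊆ closure (Z' \ baseW X) := by
  induction As with
  | nil => intro j Z Z' A h hA; exact absurd hA List.not_mem_nil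
  | cons A' rest ih =>
    rintro j Z Z' A ⟨Zm, ⟨D, hZm, hne, hform, hiso, hclD, hss⟩, ht⟩ hA
    rcases List.mem_cons.mp hA with rfl | hA
    · subst hZm
      have hDsub : D ⊆ Z' \ baseW X := by
        intro d hd
        refine ⟨tower_mono rest (j+1) _ Z' ht (Set.mem_union_right _ hd), ?_⟩
        obtain ⟨z, hz, t, ht', rfl⟩ := hform d hd
        exact addC_not_base j (ne_of_gt ht'.1) z
      intro w hw
      have hw2 : w ∈ closure D \ D := by
        rw [hclD]; exact Set.mem_union_right _ hw
      exact closure_mono hDsub hw2.1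
    · exact ih (j+1) Zm Z' A ht hA

theorem stmt17 {X : Type} [MetricSpace X] [CompactSpace X] [ConnectedSpace X]
    (hXnc : ∀ x : X, IsPreconnected ({x}ᶜ : Set X))
    {k : ℕ} (S : Fin (k + 1) → Set X)
    (hScl : ∀ i, IsClosed (S i)) (hSmono : Monotone S) (hSne : S (Fin.last k) ≠ ∅)
    (Z : Set (X × (ℕ → ℝ))) (hZ : IsIModel (List.ofFn S) Z)
    (u : X × (ℕ → ℝ)) (huB : u ∈ baseW X) (huD : u ∉ closure (Z \ baseW X)) :
    ∀ q : JSp Z,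
      (∃ p : FPts (↥Z) (JB Z), JPt Z p = q ∧
          (p.val.1 : X × (ℕ → ℝ)) = u ∧ p.val.2 = 0) →
      IsConnected ({q}ᶜ : Set (JSp Z)) := by
  rintro q ⟨p, rfl, hp1, hp2⟩
  have hZbase : baseW X ⊆ Z := tower_mono _ 0 _ Z hZ
  obtain ⟨s0, hs0⟩ := Set.nonempty_iff_ne_empty.mpr hSne
  have hlast : embW '' (S (Fin.last k)) ⊆ closure (Z \ baseW X) :=
    tower_closure _ 0 _ Z _ hZ (List.mem_ofFn.mpr ⟨Fin.last k, rfl⟩)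
  have hb0c : embW s0 ∈ closure (Z \ baseW X) := hlast ⟨s0, hs0, rfl⟩
  have hbw : ∀ x : X, embW x ∈ baseW X := fun x => rfl
  have hb0Z : embW s0 ∈ Z := hZbase (hbw s0)
  have hb0JB : (⟨embW s0, hb0Z⟩ : ↥Z) ∈ JB Z := hb0c
  have huE : u = embW u.1 := Prod.ext rfl huB
  have hone : ¬ ((p : (↥Z × unitInterval)).2 = 1) := by
    intro h
    rw [hp2] at h
    simpa using congrArg Subtype.val h
  -- the class of p in the quotient is a singleton
  have classEq : ∀ x : FPts (↥Z) (JB Z), JPt Z x = JPt Z p → x = p := by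
    intro x hx
    have hresp : ∀ a b : FPts (↥Z) (JB Z), FRel a b → (a = p) = (b = p) := by
      intro a b hab
      rcases hab with rfl | ⟨ha, hb⟩
      · rfl
      · apply propext
        constructor
        · rintro rfl; exact absurd ha hone
        · rintro rfl; exact absurd hb hone
    have hl := congrArg (Quot.lift (fun y => (y = p)) hresp) hx
    exact cast hl.symm rfl
  -- the base map
  have hφ : Continuous (fun x : X =>
      JPt Z ⟨(⟨embW x, hZbase (hbw x)⟩, 0), Or.inl rfl⟩) := by
    exact continuous_quot_mk.comp
      ((((continuous_id.prodMk continuous_const).subtype_mk _).prodMk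
        continuous_const).subtype_mk _)
  -- the collection of segments
  set c : Set (Set (JSp Z)) :=
    {s | ∃ b : ↥Z, ∃ hb : b ∈ JB Z,
      s = Set.range (fun t : unitInterval => JPt Z ⟨(b, t), Or.inr hb⟩)} with hcdef
  have hapex_mem : ∀ s ∈ c, JPt Z ⟨(⟨embW s0, hb0Z⟩, 1), Or.inr hb0JB⟩ ∈ s := by
    rintro s ⟨b, hb, rfl⟩
    exact ⟨1, Quot.sound (Or.inr ⟨rfl, rfl⟩)⟩
  have hsegpre : ∀ s ∈ c, IsPreconnected s := by
    rintro s ⟨b, hb, rfl⟩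
    apply isPreconnected_range
    exact continuous_quot_mk.comp
      (((continuous_const.prodMk continuous_id).subtype_mk _))
  have hset : ({JPt Z p}ᶜ : Set (JSp Z)) =
      ((fun x : X => JPt Z ⟨(⟨embW x, hZbase (hbw x)⟩, 0), Or.inl rfl⟩) '' {u.1}ᶜ)
        ∪ ⋃₀ c := by
    ext y
    simp only [Set.mem_compl_iff, Set.mem_singleton_iff, Set.mem_union, Set.mem_image,
      Set.mem_sUnion]
    constructor
    · intro hy
      obtain ⟨x, rfl⟩ := Quot.exists_rep y
      rcases x.2 with h0 | hb
      · by_cases hbW : (x.1.1 : X × (ℕ → ℝ)) ∈ baseW X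
        · left
          have hbW' : ((x.1.1 : X × (ℕ → ℝ))).2 = fun _ => 0 := hbW
          have hEE : (x.1.1 : X × (ℕ → ℝ)) = embW (x.1.1 : X × (ℕ → ℝ)).1 :=
            Prod.ext rfl hbW'
          refine ⟨(x.1.1 : X × (ℕ → ℝ)).1, ?_, ?_⟩
          · intro ha
            apply hy
            have hxval : (x.1.1 : X × (ℕ → ℝ)) = u := by
              rw [huE, ← ha]
              exact hEE
            have hxp : x = p :=
              Subtype.ext (Prod.ext (Subtype.ext (hxval.trans hp1.symm))
                (h0.trans hp2.symm))
            rw [hxp]; rfl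
          · apply congrArg (Quot.mk FRel)
            apply Subtype.ext
            apply Prod.ext
            · exact Subtype.ext hEE.symm
            · exact h0.symm
        · right
          have hbJB : x.1.1 ∈ JB Z := subset_closure ⟨x.1.1.2, hbW⟩
          exact ⟨_, ⟨x.1.1, hbJB, rfl⟩, x.1.2, congrArg (Quot.mk FRel) (Subtype.ext rfl)⟩
      · right
        exact ⟨_, ⟨x.1.1, hb, rfl⟩, x.1.2, congrArg (Quot.mk FRel) (Subtype.ext rfl)⟩
    · rintro (⟨a, ha, rfl⟩ | ⟨s, ⟨b, hb, rfl⟩, t, rfl⟩) h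
      · have hxp := classEq _ h
        apply ha
        have hval : embW a = u := by
          have h2 := congrArg (fun w : FPts (↥Z) (JB Z) =>
            ((w.val.1 : X × (ℕ → ℝ)))) hxp
          simpa [hp1] using h2
        exact congrArg Prod.fst hval
      · have hxp := classEq _ h
        have hval : (b : X × (ℕ → ℝ)) = u := by
          have h2 := congrArg (fun w : FPts (↥Z) (JB Z) =>
            ((w.val.1 : X × (ℕ → ℝ)))) hxp
          simpa [hp1] using h2
        exact huD (hval ▸ hb)
  rw [hset]
  constructor
  · exact ⟨_, Or.inr ⟨_, ⟨⟨embW s0, hb0Z⟩, hb0JB, rfl⟩, 1, rfl⟩⟩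
  · apply IsPreconnected.union
      (JPt Z ⟨(⟨embW s0, hZbase (hbw s0)⟩, 0), Or.inl rfl⟩)
    · refine ⟨s0, ?_, rfl⟩
      intro h
      exact huD (by rw [huE, ← h]; exact hb0c)
    · refine ⟨_, ⟨⟨embW s0, hb0Z⟩, hb0JB, rfl⟩, 0, ?_⟩
      exact congrArg (Quot.mk FRel) (Subtype.ext (Prod.ext (Subtype.ext rfl) rfl))
    · exact (hXnc u.1).image _ hφ.continuousOn
    · exact isPreconnected_sUnion _ c hapex_mem hsegpre
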